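/- Let N be a positive integer. Let f: ℝ → ℝ be 1-Lipschitz, applied coordinatewise to vectors. Let Ω₁ ∈ ℝ^{n×d} and Ω₂ ∈ ℝ^{m×n} have spectral norm at most 1, let W_1, ..., W_N ∈ O(n), and let b ∈ ℝ^n. For s ∈ ℝ^d define g(s) = Ω₂ x_N where x₀ = Ω₁ s and x_i = x_{i−1} + (1/N) f(W_i x_{i−1} + b) for i = 1, ..., N. Then for all s′, s″ ∈ ℝ^d: ‖g(s′) − g(s″)‖₂ ≤ (1 + 1/N)^N ‖s′ − s″‖₂ ≤ e ‖s′ − s″‖₂. -/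

import Mathlib

open Matrix

/-- The spectral (operator 2-) norm of a real matrix. -/
noncomputable def specNorm {p q : ℕ} (A : Matrix (Fin p) (Fin q) ℝ) : ℝ :=
  ‖LinearMap.toContinuousLinearMap (Matrix.toEuclideanLin A)‖

/-- Coordinatewise application of a scalar function to a Euclidean vector. -/
def emap {n : ℕ} (f : ℝ → ℝ) (y : EuclideanSpace ℝ (Fin n)) : EuclideanSpace ℝ (Fin n) :=
  WithLp.toLp 2 (fun j => f (y j))

lemma specNorm_bound {p q : ℕ} (A : Matrix (Fin p) (Fin q) ℝ) (v : EuclideanSpace ℝ (Fin q)) :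
    ‖Matrix.toEuclideanLin A v‖ ≤ specNorm A * ‖v‖ :=
  (LinearMap.toContinuousLinearMap (Matrix.toEuclideanLin A)).le_opNorm v

lemma toEuclideanLin_mul_apply {p q r : ℕ} (A : Matrix (Fin p) (Fin q) ℝ)
    (B : Matrix (Fin q) (Fin r) ℝ) (v : EuclideanSpace ℝ (Fin r)) :
    Matrix.toEuclideanLin (A * B) v = Matrix.toEuclideanLin A (Matrix.toEuclideanLin B v) := by
  rw [Matrix.toEuclideanLin_eq_toLin,
    Matrix.toLin_mul (PiLp.basisFun 2 ℝ (Fin r)) (PiLp.basisFun 2 ℝ (Fin q))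
      (PiLp.basisFun 2 ℝ (Fin p)) A B]
  rfl

lemma orth_norm {n : ℕ} (M : Matrix (Fin n) (Fin n) ℝ) (hM : Mᵀ * M = 1)
    (v : EuclideanSpace ℝ (Fin n)) : ‖Matrix.toEuclideanLin M v‖ = ‖v‖ := by
  have hadj : (LinearMap.adjoint (Matrix.toEuclideanLin M)) (Matrix.toEuclideanLin M v) = v := by
    rw [← Matrix.toEuclideanLin_conjTranspose_eq_adjoint,
      show Mᴴ = Mᵀ from rfl, ← toEuclideanLin_mul_apply, hM]
    simp [Matrix.toEuclideanLin_eq_toLin]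
  have hinner : (inner ℝ (Matrix.toEuclideanLin M v) (Matrix.toEuclideanLin M v) : ℝ)
      = inner ℝ v v := by
    rw [← LinearMap.adjoint_inner_left, hadj]
  have h1 := real_inner_self_eq_norm_sq (Matrix.toEuclideanLin M v)
  have h2 := real_inner_self_eq_norm_sq v
  have hsq : ‖Matrix.toEuclideanLin M v‖ ^ 2 = ‖v‖ ^ 2 := by
    rw [← h1, ← h2, hinner]
  calc ‖Matrix.toEuclideanLin M v‖ = Real.sqrt (‖Matrix.toEuclideanLin M v‖ ^ 2) := by
        rw [Real.sqrt_sq (norm_nonneg _)]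
    _ = Real.sqrt (‖v‖ ^ 2) := by rw [hsq]
    _ = ‖v‖ := Real.sqrt_sq (norm_nonneg _)

lemma emap_lip {n : ℕ} (f : ℝ → ℝ) (hf : LipschitzWith 1 f)
    (y z : EuclideanSpace ℝ (Fin n)) : ‖emap f y - emap f z‖ ≤ ‖y - z‖ := by
  rw [EuclideanSpace.norm_eq, EuclideanSpace.norm_eq]
  apply Real.sqrt_le_sqrt
  apply Finset.sum_le_sum
  intro j _
  have hj : |f (y j) - f (z j)| ≤ |y j - z j| := by
    have := hf.dist_le_mul (y j) (z j)
    simpa [Real.dist_eq] using this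
  have : ((emap f y - emap f z) j : ℝ) = f (y j) - f (z j) := rfl
  rw [this]
  have hyz : ((y - z) j : ℝ) = y j - z j := rfl
  rw [hyz, Real.norm_eq_abs, Real.norm_eq_abs]
  exact pow_le_pow_left₀ (abs_nonneg _) hj 2

/-- Input-Lipschitz bound (eq. (bnd1) of Lemma 2) for the discretized ODEtoODE policy:
`‖g(s') - g(s'')‖₂ ≤ (1 + 1/N)^N ‖s' - s''‖₂ ≤ e ‖s' - s''‖₂`. -/
theorem stmt10 (n d m N : ℕ) (hN : 0 < N)
    (f : ℝ → ℝ) (hf : LipschitzWith 1 f)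
    (Ω₁ : Matrix (Fin n) (Fin d) ℝ) (Ω₂ : Matrix (Fin m) (Fin n) ℝ)
    (hΩ₁ : specNorm Ω₁ ≤ 1) (hΩ₂ : specNorm Ω₂ ≤ 1)
    (W : ℕ → Matrix (Fin n) (Fin n) ℝ)
    (hW : ∀ i : ℕ, 1 ≤ i → i ≤ N → (W i)ᵀ * W i = 1)
    (b : EuclideanSpace ℝ (Fin n))
    (s' s'' : EuclideanSpace ℝ (Fin d))
    (x' x'' : ℕ → EuclideanSpace ℝ (Fin n))
    (hx0' : x' 0 = Matrix.toEuclideanLin Ω₁ s')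
    (hx0'' : x'' 0 = Matrix.toEuclideanLin Ω₁ s'')
    (hrec' : ∀ i : ℕ, i < N →
      x' (i + 1) = x' i + (N : ℝ)⁻¹ • emap f (Matrix.toEuclideanLin (W (i + 1)) (x' i) + b))
    (hrec'' : ∀ i : ℕ, i < N →
      x'' (i + 1) = x'' i + (N : ℝ)⁻¹ • emap f (Matrix.toEuclideanLin (W (i + 1)) (x'' i) + b)) :
    ‖Matrix.toEuclideanLin Ω₂ (x' N) - Matrix.toEuclideanLin Ω₂ (x'' N)‖
        ≤ (1 + (N : ℝ)⁻¹) ^ N * ‖s' - s''‖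
    ∧ (1 + (N : ℝ)⁻¹) ^ N * ‖s' - s''‖ ≤ Real.exp 1 * ‖s' - s''‖ := by
  have hNinv : (0 : ℝ) ≤ (N : ℝ)⁻¹ := by positivity
  -- induction claim
  have key : ∀ i : ℕ, i ≤ N → ‖x' i - x'' i‖ ≤ (1 + (N : ℝ)⁻¹) ^ i * ‖s' - s''‖ := by
    intro i
    induction i with
    | zero =>
      intro _
      rw [hx0', hx0'', ← map_sub]
      simpa using (specNorm_bound Ω₁ (s' - s'')).trans
        (mul_le_mul_of_nonneg_right hΩ₁ (norm_nonneg _))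
    | succ i ih =>
      intro hi
      have hiN : i < N := Nat.lt_of_succ_le hi
      have ihi := ih (le_of_lt hiN)
      rw [hrec' i hiN, hrec'' i hiN]
      have hrw : x' i + (N : ℝ)⁻¹ • emap f (Matrix.toEuclideanLin (W (i + 1)) (x' i) + b)
          - (x'' i + (N : ℝ)⁻¹ • emap f (Matrix.toEuclideanLin (W (i + 1)) (x'' i) + b))
          = (x' i - x'' i) + (N : ℝ)⁻¹ • (emap f (Matrix.toEuclideanLin (W (i + 1)) (x' i) + b)
            - emap f (Matrix.toEuclideanLin (W (i + 1)) (x'' i) + b)) := by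
        rw [smul_sub]; abel
      rw [hrw]
      have hem : ‖emap f (Matrix.toEuclideanLin (W (i + 1)) (x' i) + b)
          - emap f (Matrix.toEuclideanLin (W (i + 1)) (x'' i) + b)‖ ≤ ‖x' i - x'' i‖ := by
        refine (emap_lip f hf _ _).trans ?_
        have : Matrix.toEuclideanLin (W (i + 1)) (x' i) + b
            - (Matrix.toEuclideanLin (W (i + 1)) (x'' i) + b)
            = Matrix.toEuclideanLin (W (i + 1)) (x' i - x'' i) := by
          rw [map_sub]; abel
        rw [this, orth_norm (W (i + 1)) (hW (i + 1) (Nat.le_add_left 1 i) hi) (x' i - x'' i)]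
      calc ‖(x' i - x'' i) + (N : ℝ)⁻¹ • (emap f (Matrix.toEuclideanLin (W (i + 1)) (x' i) + b)
            - emap f (Matrix.toEuclideanLin (W (i + 1)) (x'' i) + b))‖
          ≤ ‖x' i - x'' i‖ + (N : ℝ)⁻¹ * ‖emap f (Matrix.toEuclideanLin (W (i + 1)) (x' i) + b)
            - emap f (Matrix.toEuclideanLin (W (i + 1)) (x'' i) + b)‖ := by
            refine (norm_add_le _ _).trans ?_
            rw [norm_smul, Real.norm_eq_abs, abs_of_nonneg hNinv]
        _ ≤ ‖x' i - x'' i‖ + (N : ℝ)⁻¹ * ‖x' i - x'' i‖ := by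
            gcongr
        _ = (1 + (N : ℝ)⁻¹) * ‖x' i - x'' i‖ := by ring
        _ ≤ (1 + (N : ℝ)⁻¹) * ((1 + (N : ℝ)⁻¹) ^ i * ‖s' - s''‖) := by
            have h1 : (0 : ℝ) ≤ 1 + (N : ℝ)⁻¹ := by positivity
            exact mul_le_mul_of_nonneg_left ihi h1
        _ = (1 + (N : ℝ)⁻¹) ^ (i + 1) * ‖s' - s''‖ := by ring
  constructor
  · rw [← map_sub]
    refine (specNorm_bound Ω₂ (x' N - x'' N)).trans ?_
    calc specNorm Ω₂ * ‖x' N - x'' N‖ ≤ 1 * ‖x' N - x'' N‖ :=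
          mul_le_mul_of_nonneg_right hΩ₂ (norm_nonneg _)
      _ = ‖x' N - x'' N‖ := one_mul _
      _ ≤ (1 + (N : ℝ)⁻¹) ^ N * ‖s' - s''‖ := key N le_rfl
  · refine mul_le_mul_of_nonneg_right ?_ (norm_nonneg _)
    have h1 : (1 : ℝ) + (N : ℝ)⁻¹ ≤ Real.exp ((N : ℝ)⁻¹) := by
      have := Real.add_one_le_exp ((N : ℝ)⁻¹)
      linarith
    calc (1 + (N : ℝ)⁻¹) ^ N ≤ Real.exp ((N : ℝ)⁻¹) ^ N :=
          pow_le_pow_left₀ (by positivity) h1 N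
      _ = Real.exp ((N : ℝ) * (N : ℝ)⁻¹) := (Real.exp_nat_mul _ N).symm
      _ = Real.exp 1 := by
          rw [mul_inv_cancel₀ (by exact_mod_cast hN.ne')]
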